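/- For the fusion metric dŝ² = α^{−2} Σ_{i=2}^{d} du_i² + α^{−2}(1 + u²/4)² dτ² on ℝ × ℝ^{d−1} (u² = Σu_i²), the scalar curvature is R̂ = −(d−1)α²/(1 + u²/4). In particular, on the defect locus u = 0 one has R̂ = −(d−1)α². -/

import Mathlib

noncomputable def pderiv' (d : ℕ) (f : (Fin d → ℝ) → ℝ) (i : Fin d)
    (x : Fin d → ℝ) : ℝ :=
  fderiv ℝ f x (Pi.single i 1)


/-- Christoffel symbols `Γ^k_{ij} = (1/2) g^{kl}(∂_i g_{jl} + ∂_j g_{il} − ∂_l g_{ij})`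
of a metric given in coordinates on `ℝ^d`. -/
noncomputable def christoffel (d : ℕ) (g : (Fin d → ℝ) → Matrix (Fin d) (Fin d) ℝ)
    (k i j : Fin d) (x : Fin d → ℝ) : ℝ :=
  (1 / 2) * ∑ l, (g x)⁻¹ k l *
    (pderiv' d (fun y => g y j l) i x + pderiv' d (fun y => g y i l) j x
      - pderiv' d (fun y => g y i j) l x)

/-- Ricci tensor in coordinates:
`R_{ij} = ∂_k Γ^k_{ij} − ∂_i Γ^k_{kj} + Γ^k_{kl}Γ^l_{ij} − Γ^k_{il}Γ^l_{kj}`. -/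
noncomputable def ricci (d : ℕ) (g : (Fin d → ℝ) → Matrix (Fin d) (Fin d) ℝ)
    (i j : Fin d) (x : Fin d → ℝ) : ℝ :=
  (∑ k, pderiv' d (christoffel d g k i j) k x)
    - (∑ k, pderiv' d (christoffel d g k k j) i x)
    + ∑ k, ∑ l, (christoffel d g k k l x * christoffel d g l i j x
        - christoffel d g k i l x * christoffel d g l k j x)

/-- Scalar curvature `R = g^{ij} R_{ij}` in coordinates. -/
noncomputable def scalarCurvature (d : ℕ)
    (g : (Fin d → ℝ) → Matrix (Fin d) (Fin d) ℝ) (x : Fin d → ℝ) : ℝ :=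
  ∑ i, ∑ j, (g x)⁻¹ i j * ricci d g i j x

namespace FusionAux


/-- The continuous linear map `v ↦ ∑ j, c j * v j`. -/
noncomputable def gradCLM (d : ℕ) (c : Fin d → ℝ) : (Fin d → ℝ) →L[ℝ] ℝ :=
  ∑ j, c j • (ContinuousLinearMap.proj j : (Fin d → ℝ) →L[ℝ] ℝ)

lemma gradCLM_apply (d : ℕ) (c v : Fin d → ℝ) :
    gradCLM d c v = ∑ j, c j * v j := by
  simp [gradCLM]

/-- `f` has gradient vector `c` at `x`. -/
def HasGrad (d : ℕ) (f : (Fin d → ℝ) → ℝ) (x c : Fin d → ℝ) : Prop :=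
  HasFDerivAt f (gradCLM d c) x

variable {d : ℕ} {f g : (Fin d → ℝ) → ℝ} {x cf cg c c' : Fin d → ℝ}

lemma gradCLM_ext (h : ∀ n, c n = c' n) : gradCLM d c = gradCLM d c' := by
  have : c = c' := funext h
  rw [this]

lemma HasGrad.congr (h : HasGrad d f x c) (hf : ∀ y, f y = g y)
    (hc : ∀ n, c n = c' n) : HasGrad d g x c' := by
  have h1 : f = g := funext hf
  have h2 := gradCLM_ext hc
  rw [HasGrad, ← h1, ← h2]; exact h

lemma HasGrad.pderiv (h : HasGrad d f x c) (i : Fin d) :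
    pderiv' d f i x = c i := by
  rw [pderiv', h.fderiv, gradCLM_apply]
  simp [Pi.single_apply]

lemma hasGrad_const (r : ℝ) (x : Fin d → ℝ) : HasGrad d (fun _ => r) x 0 := by
  have : gradCLM d (0 : Fin d → ℝ) = 0 := by
    apply ContinuousLinearMap.ext; intro v; simp [gradCLM_apply]
  rw [HasGrad, this]; exact hasFDerivAt_const r x

lemma hasGrad_coord (j : Fin d) (x : Fin d → ℝ) :
    HasGrad d (fun y => y j) x (Pi.single j 1) := by
  have : gradCLM d (Pi.single j 1) =
      (ContinuousLinearMap.proj j : (Fin d → ℝ) →L[ℝ] ℝ) := by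
    apply ContinuousLinearMap.ext; intro v
    rw [gradCLM_apply]; simp [Pi.single_apply, ite_mul]
  rw [HasGrad, this]
  exact (ContinuousLinearMap.proj (R := ℝ) (φ := fun _ : Fin d => ℝ) j).hasFDerivAt

lemma gradCLM_add (a b : Fin d → ℝ) :
    gradCLM d (a + b) = gradCLM d a + gradCLM d b := by
  apply ContinuousLinearMap.ext; intro v
  simp [gradCLM_apply, add_mul, Finset.sum_add_distrib]

lemma gradCLM_smul (r : ℝ) (a : Fin d → ℝ) :
    gradCLM d (r • a) = r • gradCLM d a := by
  apply ContinuousLinearMap.ext; intro v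
  simp [gradCLM_apply, Finset.mul_sum, mul_assoc]

lemma HasGrad.add (hf : HasGrad d f x cf) (hg : HasGrad d g x cg) :
    HasGrad d (fun y => f y + g y) x (cf + cg) := by
  rw [HasGrad, gradCLM_add]; exact HasFDerivAt.add hf hg

lemma HasGrad.mul (hf : HasGrad d f x cf) (hg : HasGrad d g x cg) :
    HasGrad d (fun y => f y * g y) x (f x • cg + g x • cf) := by
  rw [HasGrad, gradCLM_add, gradCLM_smul, gradCLM_smul]
  exact HasFDerivAt.mul hf hg

lemma HasGrad.const_mul (hf : HasGrad d f x cf) (r : ℝ) :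
    HasGrad d (fun y => r * f y) x (r • cf) := by
  have := (hasGrad_const r x).mul hf
  exact this.congr (fun y => rfl) (by intro n; simp)

lemma HasGrad.div_const (hf : HasGrad d f x cf) (r : ℝ) :
    HasGrad d (fun y => f y / r) x (r⁻¹ • cf) := by
  have := hf.const_mul r⁻¹
  exact this.congr (fun y => by rw [inv_mul_eq_div]) (fun n => rfl)

lemma HasGrad.neg (hf : HasGrad d f x cf) :
    HasGrad d (fun y => -(f y)) x (-cf) := by
  have := hf.const_mul (-1)
  exact this.congr (fun y => by ring) (fun n => by simp)

lemma HasGrad.inv (hf : HasGrad d f x cf) (h0 : f x ≠ 0) :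
    HasGrad d (fun y => (f y)⁻¹) x ((-(f x ^ 2)⁻¹) • cf) := by
  have h := (hasDerivAt_inv h0).comp_hasFDerivAt x hf
  rw [HasGrad, gradCLM_smul]
  exact h

lemma hasGrad_sum (s : Finset (Fin d)) (F : Fin d → (Fin d → ℝ) → ℝ)
    (C : Fin d → (Fin d → ℝ)) (h : ∀ j ∈ s, HasGrad d (F j) x (C j)) :
    HasGrad d (fun y => ∑ j ∈ s, F j y) x (∑ j ∈ s, C j) := by
  have hs : gradCLM d (∑ j ∈ s, C j) = ∑ j ∈ s, gradCLM d (C j) := by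
    apply ContinuousLinearMap.ext; intro v
    simp only [gradCLM_apply, ContinuousLinearMap.coe_sum', Finset.sum_apply,
      Finset.sum_apply, gradCLM_apply]
    rw [Finset.sum_comm]
    congr 1; ext j; rw [Finset.sum_mul]
  rw [HasGrad, hs]
  exact HasFDerivAt.fun_sum h

lemma pderiv'_const (r : ℝ) (i : Fin d) (x : Fin d → ℝ) :
    pderiv' d (fun _ => r) i x = 0 := by
  rw [(hasGrad_const r x).pderiv i]; rfl

end FusionAux



namespace FusionAux

variable (d : ℕ) (τ : Fin d)

noncomputable def Fν (x : Fin d → ℝ) : ℝ :=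
  1 + (∑ i ∈ Finset.univ.filter (· ≠ τ), x i ^ 2) / 4

noncomputable def gm (α : ℝ) : (Fin d → ℝ) → Matrix (Fin d) (Fin d) ℝ := fun x =>
  Matrix.of fun i j =>
    if i = j then (if i = τ then (α ^ 2)⁻¹ * Fν d τ x ^ 2 else (α ^ 2)⁻¹) else 0

lemma F_pos (x : Fin d → ℝ) : 0 < Fν d τ x := by
  have h : (0:ℝ) ≤ ∑ i ∈ Finset.univ.filter (· ≠ τ), x i ^ 2 :=
    Finset.sum_nonneg fun i _ => sq_nonneg _
  unfold Fν; linarith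

lemma F_ne (x : Fin d → ℝ) : Fν d τ x ≠ 0 := (F_pos d τ x).ne'

lemma hasGrad_F (x : Fin d → ℝ) :
    HasGrad d (Fν d τ) x (fun n => if n = τ then 0 else x n / 2) := by
  have h1 : ∀ j ∈ Finset.univ.filter (· ≠ τ),
      HasGrad d (fun y => y j ^ 2) x ((2 * x j) • (Pi.single j 1 : Fin d → ℝ)) := by
    intro j _
    have := (hasGrad_coord j x).mul (hasGrad_coord j x)
    exact this.congr (fun y => by ring)
      (by intro n; simp [Pi.single_apply]; split_ifs <;> ring)
  have h2 := hasGrad_sum _ _ _ h1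
  have h3 := (hasGrad_const (d := d) 1 x).add (h2.div_const 4)
  refine h3.congr (fun y => rfl) ?_
  intro n
  by_cases hn : n = τ <;>
    simp [hn, Finset.sum_apply, Pi.single_apply, mul_ite, Finset.sum_ite_eq] <;> ring

lemma gm_inv (α : ℝ) (hα : α ≠ 0) (x : Fin d → ℝ) :
    (gm d τ α x)⁻¹ = Matrix.of fun i j =>
      if i = j then (if i = τ then α ^ 2 * (Fν d τ x ^ 2)⁻¹ else α ^ 2) else 0 := by
  have hF := F_ne d τ x
  apply Matrix.inv_eq_right_inv
  ext i j
  rw [Matrix.mul_apply]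
  by_cases h : i = j
  · subst h
    rw [Finset.sum_eq_single i]
    · by_cases h2 : i = τ <;> simp [gm, h2] <;> field_simp
    · intro l _ hl
      simp [gm, Matrix.of_apply, Ne.symm hl]
    · simp
  · rw [Finset.sum_eq_zero, Matrix.one_apply_ne h]
    intro l _
    by_cases hil : i = l
    · subst hil; simp [gm, Matrix.of_apply, h]
    · simp [gm, Matrix.of_apply, hil]

lemma pderiv_g (α : ℝ) (x : Fin d → ℝ) (i j n : Fin d) :
    pderiv' d (fun y => gm d τ α y i j) n x =
      if i = j ∧ i = τ ∧ n ≠ τ then (α ^ 2)⁻¹ * Fν d τ x * x n else 0 := by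
  by_cases hij : i = j
  · subst hij
    by_cases hiτ : i = τ
    · have hfe : (fun y => gm d τ α y i i) = fun y => (α ^ 2)⁻¹ * Fν d τ y ^ 2 := by
        funext y; simp [gm, hiτ]
      have hg := ((hasGrad_F d τ x).mul (hasGrad_F d τ x)).const_mul ((α ^ 2)⁻¹)
      have hg2 : HasGrad d (fun y => (α ^ 2)⁻¹ * Fν d τ y ^ 2) x
          (fun n => if n = τ then 0 else (α ^ 2)⁻¹ * Fν d τ x * x n) := by
        refine hg.congr (fun y => by ring) ?_
        intro n
        by_cases hn : n = τ <;> simp [hn] <;> ring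
      rw [hfe, hg2.pderiv n]
      by_cases hn : n = τ <;> simp [hn, hiτ]
    · have hfe : (fun y => gm d τ α y i i) = fun _ => (α ^ 2)⁻¹ := by
        funext y; simp [gm, hiτ]
      rw [hfe, pderiv'_const]
      simp [hiτ]
  · have hfe : (fun y => gm d τ α y i j) = fun _ => (0:ℝ) := by
      funext y; simp [gm, hij]
    rw [hfe, pderiv'_const]
    simp [hij]

noncomputable def ee (m : Fin d) (x : Fin d → ℝ) : ℝ :=
  if m = τ then 0 else x m / (2 * Fν d τ x)

noncomputable def bb (k : Fin d) (x : Fin d → ℝ) : ℝ := -(Fν d τ x * x k / 2)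

/-- Closed form of the Christoffel symbols of the fusion metric. -/
noncomputable def Γc (k i j : Fin d) (x : Fin d → ℝ) : ℝ :=
  if k = τ then (if i = τ then ee d τ j x else if j = τ then ee d τ i x else 0)
  else if i = τ ∧ j = τ then bb d τ k x else 0

lemma christoffel_eq (α : ℝ) (hα : α ≠ 0) (k i j : Fin d) (x : Fin d → ℝ) :
    christoffel d (gm d τ α) k i j x = Γc d τ k i j x := by
  have hF := F_ne d τ x
  rw [christoffel]
  have hsum : ∀ A : Fin d → ℝ, (∑ l, (gm d τ α x)⁻¹ k l * A l)
      = (if k = τ then α ^ 2 * (Fν d τ x ^ 2)⁻¹ else α ^ 2) * A k := by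
    intro A
    rw [Finset.sum_eq_single k]
    · rw [gm_inv d τ α hα]; simp
    · intro l _ hl
      rw [gm_inv d τ α hα]; simp [Ne.symm hl]
    · simp
  rw [hsum]
  simp only [pderiv_g]
  by_cases hk : k = τ <;> by_cases hi : i = τ <;> by_cases hj : j = τ <;>
    simp [Γc, ee, bb, hk, hi, hj, @eq_comm (Fin d) τ] <;> field_simp <;> ring

lemma pderiv_bb (k n : Fin d) (x : Fin d → ℝ) :
    pderiv' d (bb d τ k) n x =
      -(Fν d τ x * (if n = k then 1 else 0)
        + x k * (if n = τ then 0 else x n / 2)) / 2 := by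
  have hg := (((hasGrad_F d τ x).mul (hasGrad_coord k x)).div_const 2).neg
  have hg2 : HasGrad d (bb d τ k) x
      (fun n => -(Fν d τ x * (if n = k then 1 else 0)
        + x k * (if n = τ then 0 else x n / 2)) / 2) := by
    refine hg.congr (fun y => rfl) ?_
    intro n
    simp only [Pi.neg_apply, Pi.smul_apply, Pi.add_apply, Pi.single_apply, smul_eq_mul]
    split_ifs <;> ring
  rw [hg2.pderiv n]

lemma pderiv_ee_diag (i : Fin d) (hi : i ≠ τ) (x : Fin d → ℝ) :
    pderiv' d (ee d τ i) i x
      = (2 * Fν d τ x)⁻¹ - x i ^ 2 * ((2 * Fν d τ x) ^ 2)⁻¹ := by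
  have h2F : (2 : ℝ) * Fν d τ x ≠ 0 := by
    have := F_ne d τ x; positivity
  have hinv := ((hasGrad_F d τ x).const_mul 2).inv h2F
  have hmul := (hasGrad_coord i x).mul hinv
  have hg2 : HasGrad d (ee d τ i) x
      (fun n => (if n = i then (2 * Fν d τ x)⁻¹ else 0)
        - x i * (if n = τ then 0 else x n) * ((2 * Fν d τ x) ^ 2)⁻¹) := by
    refine hmul.congr (fun y => ?_) ?_
    · simp [ee, hi, div_eq_mul_inv]
    · intro n
      simp only [Pi.add_apply, Pi.smul_apply, Pi.single_apply, smul_eq_mul]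
      split_ifs <;> ring
  rw [hg2.pderiv i]
  rw [if_pos rfl, if_neg hi]
  ring

lemma card_compl_τ : (({τ}ᶜ : Finset (Fin d))).card = d - 1 := by
  rw [Finset.card_compl]
  simp

lemma cast_card_compl_τ : ((({τ}ᶜ : Finset (Fin d))).card : ℝ) = (d : ℝ) - 1 := by
  rw [card_compl_τ]
  have : 1 ≤ d := τ.pos
  push_cast [Nat.cast_sub this]
  ring

lemma F_eq (x : Fin d → ℝ) :
    Fν d τ x = 1 + (∑ k ∈ ({τ}ᶜ : Finset (Fin d)), x k ^ 2) / 4 := by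
  rw [Fν, Finset.filter_ne', Finset.compl_singleton]

lemma ricci_ττ (α : ℝ) (hα : α ≠ 0) (x : Fin d → ℝ) :
    ricci d (gm d τ α) τ τ x = -((d : ℝ) - 1) * Fν d τ x / 2 := by
  have hfun : ∀ k i j, christoffel d (gm d τ α) k i j = Γc d τ k i j :=
    fun k i j => funext fun y => christoffel_eq d τ α hα k i j y
  have hF := F_ne d τ x
  rw [ricci]
  simp only [hfun]
  have h2 : ∀ k : Fin d, pderiv' d (Γc d τ k k τ) τ x = 0 := by
    intro k
    have hz : Γc d τ k k τ = fun _ => (0:ℝ) := by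
      funext y; by_cases hk : k = τ <;> simp [Γc, ee, hk]
    rw [hz, pderiv'_const]
  have h1 : (∑ k, pderiv' d (Γc d τ k τ τ) k x)
      = -(∑ k ∈ ({τ}ᶜ : Finset (Fin d)), x k ^ 2) / 4
        - ((d : ℝ) - 1) * Fν d τ x / 2 := by
    rw [Fintype.sum_eq_add_sum_compl τ]
    have hz : Γc d τ τ τ τ = fun _ => (0:ℝ) := by
      funext y; simp [Γc, ee]
    rw [hz, pderiv'_const]
    have hc : ∀ k ∈ ({τ}ᶜ : Finset (Fin d)),
        pderiv' d (Γc d τ k τ τ) k x = -Fν d τ x / 2 - x k ^ 2 / 4 := by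
      intro k hk
      have hk' : k ≠ τ := by simpa using hk
      have hb : Γc d τ k τ τ = bb d τ k := by
        funext y; simp [Γc, hk']
      rw [hb, pderiv_bb]
      simp [hk']
      ring
    rw [Finset.sum_congr rfl hc]
    rw [Finset.sum_sub_distrib, Finset.sum_const, nsmul_eq_mul, cast_card_compl_τ]
    rw [← Finset.sum_div]
    ring
  have h3 : (∑ k, ∑ l, (Γc d τ k k l x * Γc d τ l τ τ x
        - Γc d τ k τ l x * Γc d τ l k τ x))
      = (∑ k ∈ ({τ}ᶜ : Finset (Fin d)), x k ^ 2) / 4 := by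
    have hterm : ∀ k l, Γc d τ k k l x * Γc d τ l τ τ x
        - Γc d τ k τ l x * Γc d τ l k τ x
        = if k ≠ τ ∧ l = τ then x k ^ 2 / 4 else 0 := by
      intro k l
      by_cases hk : k = τ <;> by_cases hl : l = τ <;>
        simp [Γc, ee, bb, hk, hl, @eq_comm (Fin d) τ] <;> field_simp <;> ring
    simp only [hterm]
    rw [Finset.sum_comm]
    rw [Fintype.sum_eq_add_sum_compl τ]
    have hzero : (∑ l ∈ ({τ}ᶜ : Finset (Fin d)),
        ∑ k, if k ≠ τ ∧ l = τ then x k ^ 2 / 4 else 0) = 0 := by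
      apply Finset.sum_eq_zero
      intro l hl
      have hl' : l ≠ τ := by simpa using hl
      apply Finset.sum_eq_zero
      intro k _
      simp [hl']
    rw [hzero, add_zero]
    rw [Fintype.sum_eq_add_sum_compl τ]
    have hττ : (if τ ≠ τ ∧ τ = τ then x τ ^ 2 / 4 else 0) = 0 := by simp
    have hcongr : ∀ k ∈ ({τ}ᶜ : Finset (Fin d)),
        (if k ≠ τ ∧ τ = τ then x k ^ 2 / 4 else 0) = x k ^ 2 / 4 := by
      intro k hk
      have hk' : k ≠ τ := by simpa using hk
      simp [hk']
    rw [hττ, zero_add, Finset.sum_congr rfl hcongr, ← Finset.sum_div]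
  rw [h1, h3]
  simp only [h2]
  simp
  ring

lemma ricci_ii (α : ℝ) (hα : α ≠ 0) (i : Fin d) (hi : i ≠ τ) (x : Fin d → ℝ) :
    ricci d (gm d τ α) i i x = -(2 * Fν d τ x)⁻¹ := by
  have hfun : ∀ k i j, christoffel d (gm d τ α) k i j = Γc d τ k i j :=
    fun k i j => funext fun y => christoffel_eq d τ α hα k i j y
  have hF := F_ne d τ x
  rw [ricci]
  simp only [hfun]
  have h1 : ∀ k : Fin d, pderiv' d (Γc d τ k i i) k x = 0 := by
    intro k
    have hz : Γc d τ k i i = fun _ => (0:ℝ) := by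
      funext y; by_cases hk : k = τ <;> simp [Γc, ee, hk, hi]
    rw [hz, pderiv'_const]
  have h2 : (∑ k, pderiv' d (Γc d τ k k i) i x)
      = (2 * Fν d τ x)⁻¹ - x i ^ 2 * ((2 * Fν d τ x) ^ 2)⁻¹ := by
    rw [Fintype.sum_eq_add_sum_compl τ]
    have he : Γc d τ τ τ i = ee d τ i := by
      funext y; simp [Γc]
    have hzero : (∑ k ∈ ({τ}ᶜ : Finset (Fin d)),
        pderiv' d (Γc d τ k k i) i x) = 0 := by
      apply Finset.sum_eq_zero
      intro k hk
      have hk' : k ≠ τ := by simpa using hk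
      have hz : Γc d τ k k i = fun _ => (0:ℝ) := by
        funext y; simp [Γc, hk']
      rw [hz, pderiv'_const]
    rw [hzero, add_zero, he, pderiv_ee_diag d τ i hi]
  have h3 : (∑ k, ∑ l, (Γc d τ k k l x * Γc d τ l i i x
        - Γc d τ k i l x * Γc d τ l k i x))
      = -(x i ^ 2 * ((2 * Fν d τ x) ^ 2)⁻¹) := by
    have hterm : ∀ k l, Γc d τ k k l x * Γc d τ l i i x
        - Γc d τ k i l x * Γc d τ l k i x
        = if k = τ ∧ l = τ then -(x i ^ 2 * ((2 * Fν d τ x) ^ 2)⁻¹) else 0 := by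
      intro k l
      by_cases hk : k = τ <;> by_cases hl : l = τ <;>
        simp [Γc, ee, bb, hk, hl, hi, @eq_comm (Fin d) τ] <;> field_simp <;> ring
    simp only [hterm]
    rw [Fintype.sum_eq_add_sum_compl τ]
    have hzero : (∑ k ∈ ({τ}ᶜ : Finset (Fin d)),
        ∑ l, if k = τ ∧ l = τ then -(x i ^ 2 * ((2 * Fν d τ x) ^ 2)⁻¹) else 0) = 0 := by
      apply Finset.sum_eq_zero
      intro k hk
      have hk' : k ≠ τ := by simpa using hk
      apply Finset.sum_eq_zero
      intro l _
      simp [hk']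
    rw [hzero, add_zero]
    rw [Fintype.sum_eq_add_sum_compl τ]
    have hzero2 : (∑ l ∈ ({τ}ᶜ : Finset (Fin d)),
        if τ = τ ∧ l = τ then -(x i ^ 2 * ((2 * Fν d τ x) ^ 2)⁻¹) else 0) = 0 := by
      apply Finset.sum_eq_zero
      intro l hl
      have hl' : l ≠ τ := by simpa using hl
      simp [hl']
    rw [hzero2, add_zero]
    simp
  rw [h2, h3]
  simp only [h1]
  simp
  ring

lemma scalar_eq (α : ℝ) (hα : α ≠ 0) (x : Fin d → ℝ) :
    scalarCurvature d (gm d τ α) x = -((d : ℝ) - 1) * α ^ 2 / Fν d τ x := by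
  have hF := F_ne d τ x
  rw [scalarCurvature]
  have hin : ∀ i, (∑ j, (gm d τ α x)⁻¹ i j * ricci d (gm d τ α) i j x)
      = (if i = τ then α ^ 2 * (Fν d τ x ^ 2)⁻¹ else α ^ 2)
          * ricci d (gm d τ α) i i x := by
    intro i
    rw [Finset.sum_eq_single i]
    · rw [gm_inv d τ α hα]; simp
    · intro l _ hl
      rw [gm_inv d τ α hα]; simp [Ne.symm hl]
    · simp
  simp only [hin]
  rw [Fintype.sum_eq_add_sum_compl τ]
  rw [if_pos rfl, ricci_ττ d τ α hα x]
  have hc : ∀ i ∈ ({τ}ᶜ : Finset (Fin d)),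
      (if i = τ then α ^ 2 * (Fν d τ x ^ 2)⁻¹ else α ^ 2)
        * ricci d (gm d τ α) i i x = α ^ 2 * -(2 * Fν d τ x)⁻¹ := by
    intro i hi
    have hi' : i ≠ τ := by simpa using hi
    rw [if_neg hi', ricci_ii d τ α hα i hi' x]
  rw [Finset.sum_congr rfl hc, Finset.sum_const, nsmul_eq_mul, cast_card_compl_τ]
  field_simp
  ring

end FusionAux

/-- For the fusion metric `dŝ² = α⁻² Σ duᵢ² + α⁻²(1 + u²/4)² dτ²` on `ℝ × ℝ^{d−1}`,
the scalar curvature is `R̂ = −(d−1)α²/(1 + u²/4)`; in particular `R̂ = −(d−1)α²` on the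
defect locus `u = 0`. -/
theorem fusion_metric_scalar_curvature (d : ℕ) (hd : 2 ≤ d) (α : ℝ) (hα : 0 < α) :
    let τidx : Fin d := ⟨0, by omega⟩
    let usq : (Fin d → ℝ) → ℝ := fun x => ∑ i ∈ Finset.univ.filter (· ≠ τidx), x i ^ 2
    let g : (Fin d → ℝ) → Matrix (Fin d) (Fin d) ℝ := fun x =>
      Matrix.of fun i j =>
        if i = j then
          (if i = τidx then (α ^ 2)⁻¹ * (1 + usq x / 4) ^ 2 else (α ^ 2)⁻¹)
        else 0
    (∀ x : Fin d → ℝ, scalarCurvature d g x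
        = -((d : ℝ) - 1) * α ^ 2 / (1 + usq x / 4)) ∧
    (∀ x : Fin d → ℝ, usq x = 0 →
        scalarCurvature d g x = -((d : ℝ) - 1) * α ^ 2) := by
  intro τidx usq g
  have hg : g = FusionAux.gm d τidx α := rfl
  have hF : ∀ x, (1 : ℝ) + usq x / 4 = FusionAux.Fν d τidx x := fun x => rfl
  constructor
  · intro x
    rw [hg, hF x]
    exact FusionAux.scalar_eq d τidx α hα.ne' x
  · intro x hx
    rw [hg]
    have h := FusionAux.scalar_eq d τidx α hα.ne' x
    have h1 : FusionAux.Fν d τidx x = 1 := by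
      rw [← hF x, hx]; norm_num
    rw [h, h1, div_one]
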